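/- Fix n ≥ 1 and a primitive 2n-th root of unity ξ ∈ ℂ, and let the binary cyclic group C̃_n ≅ ℤ/2nℤ act on ℂ[x,y] with a chosen generator acting by x ↦ ξx, y ↦ ξ⁻¹y. An ideal I ⊆ ⟨x,y⟩ of ℂ[x,y] is a C̃_n-cluster if and only if there exist an integer j with 1 ≤ j ≤ 2n−1 and (p,q) ∈ ℂ² with (p,q) ≠ (0,0) such that I = ⟨p·xʲ − q·y^{2n−j}, xy, x^{j+1}, y^{2n−j+1}⟩. -/

import Mathlib

open MvPolynomial

/-- The generator of the binary cyclic group action on `ℂ[x,y]`: `x ↦ ξx`, `y ↦ ξ⁻¹y`. -/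
noncomputable def cycAct2 (ξ : ℂ) :
    MvPolynomial (Fin 2) ℂ →ₐ[ℂ] MvPolynomial (Fin 2) ℂ :=
  aeval ![C ξ * X 0, C ξ⁻¹ * X 1]

open Finset
set_option linter.unusedSectionVars false
set_option maxHeartbeats 1000000
set_option synthInstance.maxHeartbeats 400000

namespace Stmt16




variable {N : ℕ} [NeZero N] {ξ : ℂ}

/-- character -/
noncomputable def χ (ξ : ℂ) (w : ZMod N) : ℂ := ξ ^ w.val

section chi
variable (hξ : IsPrimitiveRoot ξ N)
include hξ

lemma chi_pow_mod (m : ℕ) : ξ ^ (m % N) = ξ ^ m := by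
  have h := hξ.eq_orderOf
  rw [h] at *
  exact pow_mod_orderOf ξ m

lemma chi_natCast (m : ℕ) : χ ξ (m : ZMod N) = ξ ^ m := by
  rw [χ, ZMod.val_natCast, chi_pow_mod hξ]

lemma chi_add (a b : ZMod N) : χ ξ (a + b) = χ ξ a * χ ξ b := by
  rw [χ, ZMod.val_add, chi_pow_mod hξ, pow_add]; rfl

lemma chi_zero : χ (N := N) ξ 0 = 1 := by
  simp [χ]

lemma chi_ne_zero (w : ZMod N) : χ ξ w ≠ 0 :=
  pow_ne_zero _ (hξ.ne_zero (NeZero.ne N))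

lemma chi_neg_mul_chi (a : ZMod N) : χ ξ (-a) * χ ξ a = 1 := by
  rw [← chi_add hξ, neg_add_cancel, chi_zero hξ]

lemma chi_nat_mul (m : ℕ) (a : ZMod N) : χ ξ ((m : ZMod N) * a) = χ ξ a ^ m := by
  induction m with
  | zero => simp [chi_zero hξ]
  | succ k ih => push_cast; rw [add_mul, one_mul, chi_add hξ, ih, pow_succ]

lemma chi_orth (d : ZMod N) : ∑ k : ZMod N, χ ξ (d * k) = if d = 0 then (N : ℂ) else 0 := by
  have hbij : Function.Bijective (fun m : Fin N => ((m : ℕ) : ZMod N)) := by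
    rw [Fintype.bijective_iff_injective_and_card]
    constructor
    · intro m1 m2 h
      have := congrArg ZMod.val h
      rwa [ZMod.val_natCast_of_lt m1.2, ZMod.val_natCast_of_lt m2.2, Fin.val_inj] at this
    · simp [ZMod.card]
  rw [← Function.Bijective.sum_comp hbij (fun k => χ ξ (d * k))]
  have : ∀ m : Fin N, χ ξ (d * ((m : ℕ) : ZMod N)) = (χ ξ d) ^ (m : ℕ) := by
    intro m; rw [mul_comm, chi_nat_mul hξ]
  simp_rw [this]
  rw [Fin.sum_univ_eq_sum_range]
  by_cases hd : d = 0
  · simp [hd, chi_zero hξ]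
  · rw [if_neg hd]
    have h1 : χ ξ d ≠ 1 := by
      rw [χ]
      intro h
      have : d.val = 0 := by
        by_contra hv
        exact (hξ.pow_ne_one_of_pos_of_lt hv (ZMod.val_lt d)) h
      exact hd (by rwa [ZMod.val_eq_zero] at this)
    rw [geom_sum_eq h1]
    have : χ ξ d ^ N = 1 := by
      rw [χ, ← pow_mul, mul_comm, pow_mul, hξ.pow_eq_one, one_pow]
    rw [this, sub_self, zero_div]

end chi







instance : CoeFun (AddMonoidAlgebra ℂ (ZMod N)) (fun _ => ZMod N → ℂ) := ⟨fun u => ⇑u.coeff⟩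

lemma ama_smul_apply (c : ℂ) (f : AddMonoidAlgebra ℂ (ZMod N)) (k : ZMod N) :
    (c • f) k = c * f k := rfl

/-- eigenvector of translation -/
noncomputable def v (ξ : ℂ) (w : ZMod N) : AddMonoidAlgebra ℂ (ZMod N) :=
  AddMonoidAlgebra.ofCoeff (Finsupp.equivFunOnFinite.symm fun k => χ ξ (-(w * k)))

lemma v_apply (w k : ZMod N) : v ξ w k = χ ξ (-(w * k)) := rfl

section withξ
variable (hξ : IsPrimitiveRoot ξ N)
include hξ

lemma v_ne_zero (w : ZMod N) : v ξ w ≠ 0 := by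
  intro h
  have h0 : v ξ w 0 = 0 := by rw [h]; rfl
  rw [v_apply, mul_zero, neg_zero, chi_zero hξ] at h0
  exact one_ne_zero h0

/-- the functional dual to `v w` -/
noncomputable def ℓ (ξ : ℂ) (w : ZMod N) : AddMonoidAlgebra ℂ (ZMod N) →ₗ[ℂ] ℂ :=
  (∑ k : ZMod N, χ ξ (w * k) • (Finsupp.lapply k : (ZMod N →₀ ℂ) →ₗ[ℂ] ℂ)) ∘ₗ
    (AddMonoidAlgebra.coeffLinearEquiv ℂ).toLinearMap

omit hξ in
lemma ell_apply (w : ZMod N) (u : AddMonoidAlgebra ℂ (ZMod N)) :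
    ℓ ξ w u = ∑ k : ZMod N, χ ξ (w * k) * u k := by
  rw [ℓ, LinearMap.comp_apply, LinearMap.sum_apply]
  rfl

lemma ell_v (w w' : ZMod N) : ℓ ξ w (v ξ w') = if w' = w then (N : ℂ) else 0 := by
  rw [ell_apply]
  have h1 : ∀ k : ZMod N, χ ξ (w * k) * v ξ w' k = χ ξ ((w - w') * k) := by
    intro k
    rw [v_apply, ← chi_add hξ]
    congr 1
    ring
  simp_rw [h1, chi_orth hξ]
  simp [sub_eq_zero, eq_comm]

lemma indep {c : ZMod N → ℂ} (h : ∑ w : ZMod N, c w • v ξ w = 0) : ∀ w, c w = 0 := by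
  intro w0
  have h2 := congrArg (ℓ ξ w0) h
  rw [map_sum, map_zero] at h2
  simp_rw [map_smul, ell_v hξ, smul_eq_mul, mul_ite, mul_zero] at h2
  rw [Finset.sum_ite_eq' Finset.univ w0 (fun w => c w * N)] at h2
  simp only [mem_univ, if_true] at h2
  have hN : (N : ℂ) ≠ 0 := Nat.cast_ne_zero.mpr (NeZero.ne N)
  exact (mul_eq_zero.mp h2).resolve_right hN

lemma single_mem_span (k : ZMod N) :
    AddMonoidAlgebra.single k (1:ℂ) ∈ Submodule.span ℂ (Set.range (v (N := N) ξ)) := by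
  have key : AddMonoidAlgebra.single k (1:ℂ) = (N : ℂ)⁻¹ • ∑ w : ZMod N, χ ξ (w * k) • v ξ w := by
    apply AddMonoidAlgebra.ext; apply Finsupp.ext
    intro k'
    rw [ama_smul_apply, AddMonoidAlgebra.coeff_sum, Finsupp.finset_sum_apply]
    simp_rw [ama_smul_apply, v_apply]
    have h1 : ∀ w : ZMod N, χ ξ (w * k) * χ ξ (-(w * k')) = χ ξ ((k - k') * w) := by
      intro w; rw [← chi_add hξ]; congr 1; ring
    simp_rw [h1, chi_orth hξ]
    by_cases hk : k = k'
    · subst hk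
      simp only [sub_self, if_true]
      rw [AddMonoidAlgebra.coeff_single_apply, if_pos rfl]
      have hN : (N : ℂ) ≠ 0 := Nat.cast_ne_zero.mpr (NeZero.ne N)
      field_simp
    · rw [if_neg (sub_ne_zero.mpr hk), AddMonoidAlgebra.coeff_single_apply, if_neg hk, mul_zero]
  rw [key]
  exact Submodule.smul_mem _ _ (Submodule.sum_mem _ fun w _ =>
    Submodule.smul_mem _ _ (Submodule.subset_span ⟨w, rfl⟩))

lemma span_v_top : Submodule.span ℂ (Set.range (v (N := N) ξ)) = ⊤ := by
  rw [eq_top_iff]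
  intro u _
  have h3 : u = ∑ k : ZMod N, u k • AddMonoidAlgebra.single k (1:ℂ) := by
    apply AddMonoidAlgebra.ext; apply Finsupp.ext
    intro k'
    rw [AddMonoidAlgebra.coeff_sum, Finsupp.finset_sum_apply]
    simp_rw [ama_smul_apply, AddMonoidAlgebra.coeff_single_apply, mul_ite, mul_one, mul_zero]
    rw [Finset.sum_ite_eq' Finset.univ k' (fun k => u k)]
    simp
  rw [h3]
  exact Submodule.sum_mem _ fun k _ => Submodule.smul_mem _ _ (single_mem_span hξ k)

lemma T_v (w : ZMod N) :
    AddMonoidAlgebra.single (1 : ZMod N) (1:ℂ) * v ξ w = χ ξ w • v ξ w := by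
  apply AddMonoidAlgebra.ext; apply Finsupp.ext
  intro k
  rw [AddMonoidAlgebra.coeff_single_mul_apply, ama_smul_apply, v_apply, v_apply, one_mul,
    ← chi_add hξ]
  congr 1
  ring

lemma eigen {u : AddMonoidAlgebra ℂ (ZMod N)} {w : ZMod N}
    (h : AddMonoidAlgebra.single (1 : ZMod N) (1:ℂ) * u = χ ξ w • u) :
    u = u 0 • v ξ w := by
  have hrec : ∀ k : ZMod N, u k = χ ξ (-w) * u (k - 1) := by
    intro k
    have h1 := congrArg (fun z : AddMonoidAlgebra ℂ (ZMod N) => z k) h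
    simp only [AddMonoidAlgebra.coeff_single_mul_apply, one_mul, ama_smul_apply] at h1
    have h2 : χ ξ (-w) * u (-1 + k) = u k := by
      rw [h1, ← mul_assoc, chi_neg_mul_chi hξ, one_mul]
    rw [← h2]
    congr 2
    ring
  have hnat : ∀ m : ℕ, u ((m : ℕ) : ZMod N) = χ ξ (-(w * ((m:ℕ) : ZMod N))) * u 0 := by
    intro m
    induction m with
    | zero => simp [chi_zero hξ]
    | succ j ih =>
      rw [hrec ((j+1 : ℕ) : ZMod N)]
      have h4 : ((j+1 : ℕ) : ZMod N) - 1 = ((j:ℕ) : ZMod N) := by push_cast; ring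
      rw [h4, ih, ← mul_assoc, ← chi_add hξ]
      congr 2
      push_cast
      ring
  apply AddMonoidAlgebra.ext; apply Finsupp.ext
  intro k
  obtain ⟨m, rfl⟩ := ZMod.natCast_zmod_surjective (n := N) k
  rw [ama_smul_apply, v_apply, hnat m, mul_comm]

end withξ




abbrev S2 := MvPolynomial (Fin 2) ℂ

/-- coefficient data for the model map -/
noncomputable def Fd (ξ p q : ℂ) (N j : ℕ) [NeZero N] (a b : ℕ) : AddMonoidAlgebra ℂ (ZMod N) :=
  if b = 0 then
    (if a < j then v ξ ((a : ℕ) : ZMod N) else if a = j then q • v ξ ((j : ℕ) : ZMod N) else 0)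
  else if a = 0 then
    (if b < N - j then v ξ (-((b : ℕ) : ZMod N))
     else if b = N - j then p • v ξ ((j : ℕ) : ZMod N) else 0)
  else 0

/-- the model linear map -/
noncomputable def Φ (ξ p q : ℂ) (N j : ℕ) [NeZero N] :
    S2 →ₗ[ℂ] AddMonoidAlgebra ℂ (ZMod N) :=
  (basisMonomials (Fin 2) ℂ).constr ℂ (fun d => Fd ξ p q N j (d 0) (d 1))

lemma Φ_monomial (p q : ℂ) (j : ℕ) (d : Fin 2 →₀ ℕ) (r : ℂ) :
    Φ ξ p q N j (monomial d r) = r • Fd ξ p q N j (d 0) (d 1) := by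
  have h1 : monomial d r = r • monomial d (1:ℂ) := by
    rw [MvPolynomial.smul_monomial, smul_eq_mul, mul_one]
  rw [h1, map_smul]
  congr 1
  have h2 : monomial d (1:ℂ) = basisMonomials (Fin 2) ℂ d := by
    rw [coe_basisMonomials]
  rw [h2, Φ, Module.Basis.constr_basis]

lemma single_apply_d (a b : ℕ) :
    ((Finsupp.single (0 : Fin 2) a + Finsupp.single (1 : Fin 2) b : Fin 2 →₀ ℕ)) 0 = a ∧
    ((Finsupp.single (0 : Fin 2) a + Finsupp.single (1 : Fin 2) b : Fin 2 →₀ ℕ)) 1 = b := by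
  constructor <;> simp [Finsupp.single_apply]

lemma Xab_eq (a b : ℕ) :
    (X 0 : S2) ^ a * X 1 ^ b = monomial (Finsupp.single 0 a + Finsupp.single 1 b) 1 := by
  rw [X_pow_eq_monomial, X_pow_eq_monomial, monomial_mul, one_mul]

lemma Φ_Xab (p q : ℂ) (j : ℕ) (a b : ℕ) :
    Φ ξ p q N j ((X 0 : S2) ^ a * X 1 ^ b) = Fd ξ p q N j a b := by
  rw [Xab_eq, Φ_monomial, (single_apply_d a b).1, (single_apply_d a b).2, one_smul]





section gens

variable (p q : ℂ) (j : ℕ)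

noncomputable def g1 : S2 := C p * X 0 ^ j - C q * X 1 ^ (N - j)
noncomputable def g2 : S2 := X 0 * X 1
noncomputable def g3 : S2 := X 0 ^ (j + 1)
noncomputable def g4 : S2 := X 1 ^ (N - j + 1)
noncomputable def Jd : Ideal S2 :=
  Ideal.span {g1 (N := N) p q j, g2, g3 j, g4 (N := N) j}

end gens

section model

variable {p q : ℂ} {j : ℕ}
variable (hξ : IsPrimitiveRoot ξ N) (hj1 : 1 ≤ j) (hj2 : j + 1 ≤ N)
  (hpq : ¬(p = 0 ∧ q = 0))

lemma xi_ne_zero (hξ : IsPrimitiveRoot ξ N) : ξ ≠ 0 := by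
  intro h
  have h1 : ξ ^ N = 1 := hξ.pow_eq_one
  rw [h, zero_pow (NeZero.ne N)] at h1
  exact zero_ne_one h1

lemma inv_pow_eq (hξ : IsPrimitiveRoot ξ N) {k : ℕ} (hk : k ≤ N) :
    (ξ⁻¹) ^ (N - k) = ξ ^ k := by
  have h1 : ξ ^ (N - k) * ξ ^ k = 1 := by
    rw [← pow_add, Nat.sub_add_cancel hk, hξ.pow_eq_one]
  rw [inv_pow, inv_eq_of_mul_eq_one_right h1]

lemma chi_cast_neg (hξ : IsPrimitiveRoot ξ N) (b : ℕ) :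
    χ ξ (-((b:ℕ) : ZMod N)) = (ξ⁻¹) ^ b := by
  have h1 := chi_neg_mul_chi hξ ((b:ℕ) : ZMod N)
  rw [chi_natCast hξ] at h1
  rw [inv_pow, ← eq_inv_of_mul_eq_one_left h1]

lemma chi_cast_sub (hξ : IsPrimitiveRoot ξ N) (a b : ℕ) :
    χ ξ (((a:ℕ) : ZMod N) - ((b:ℕ) : ZMod N)) = ξ ^ a * (ξ⁻¹) ^ b := by
  have h1 : (((a:ℕ) : ZMod N) - ((b:ℕ) : ZMod N)) + ((b:ℕ) : ZMod N) = ((a:ℕ) : ZMod N) := by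
    ring
  have h2 := chi_add hξ ((((a:ℕ) : ZMod N) - ((b:ℕ) : ZMod N))) (((b:ℕ) : ZMod N))
  rw [h1, chi_natCast hξ, chi_natCast hξ] at h2
  have hb : ξ ^ b ≠ 0 := pow_ne_zero _ (xi_ne_zero hξ)
  rw [inv_pow, h2, mul_inv_cancel_right₀ hb]

include hξ hj1 hj2 in
lemma Fd_eigen (a b : ℕ) :
    AddMonoidAlgebra.single (1 : ZMod N) (1:ℂ) * Fd ξ p q N j a b
      = (ξ ^ a * (ξ⁻¹) ^ b) • Fd ξ p q N j a b := by
  have hN1 : (1:ℕ) ≤ N := Nat.one_le_iff_ne_zero.mpr (NeZero.ne N)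
  rw [Fd]
  split_ifs with hb ha1 ha2 ha0 hb1 hb2
  · -- b = 0, a < j
    subst hb
    rw [T_v hξ, chi_natCast hξ, pow_zero, mul_one]
  · -- b = 0, a = j
    subst hb; subst ha2
    rw [mul_smul_comm, T_v hξ, chi_natCast hξ, pow_zero, mul_one, smul_smul, smul_smul, mul_comm]
  · simp
  · -- a = 0, b < N - j
    subst ha0
    rw [T_v hξ, chi_cast_neg hξ, pow_zero, one_mul]
  · -- a = 0, b = N - j
    subst ha0; subst hb2
    rw [mul_smul_comm, T_v hξ, chi_natCast hξ, pow_zero, one_mul, smul_smul, smul_smul,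
      inv_pow_eq hξ (by omega), mul_comm]
  · simp
  · simp

/-- key: Φ kills multiples of the generators -/
lemma Phi_mul_eq_zero_of_basis {g : S2}
    (h : ∀ d : Fin 2 →₀ ℕ, Φ ξ p q N j (monomial d 1 * g) = 0) :
    ∀ f : S2, Φ ξ p q N j (f * g) = 0 := by
  intro f
  have key : (Φ ξ p q N j) ∘ₗ (LinearMap.mulRight ℂ g) = 0 := by
    apply Module.Basis.ext (basisMonomials (Fin 2) ℂ)
    intro d
    rw [coe_basisMonomials] at *
    simpa using h d
  have := congrArg (fun L : S2 →ₗ[ℂ] AddMonoidAlgebra ℂ (ZMod N) => L f) key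
  simpa using this

include hj1 hj2 in
lemma Phi_mul_g2 (f : S2) : Φ ξ p q N j (f * g2) = 0 := by
  apply Phi_mul_eq_zero_of_basis
  intro d
  have h1 : (g2 : S2) = monomial (Finsupp.single 0 1 + Finsupp.single 1 1) 1 := by
    rw [g2, ← Xab_eq, pow_one, pow_one]
  rw [h1, monomial_mul, mul_one, Φ_monomial, one_smul]
  have e0 : ((d + (Finsupp.single (0:Fin 2) 1 + Finsupp.single (1:Fin 2) 1) : Fin 2 →₀ ℕ)) 0 = d 0 + 1 := by
    simp [Finsupp.single_apply]
  have e1 : ((d + (Finsupp.single (0:Fin 2) 1 + Finsupp.single (1:Fin 2) 1) : Fin 2 →₀ ℕ)) 1 = d 1 + 1 := by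
    simp [Finsupp.single_apply]
  rw [e0, e1, Fd, if_neg (by omega), if_neg (by omega)]

include hj1 hj2 in
lemma Phi_mul_g3 (f : S2) : Φ ξ p q N j (f * g3 j) = 0 := by
  apply Phi_mul_eq_zero_of_basis
  intro d
  rw [g3, X_pow_eq_monomial, monomial_mul, mul_one, Φ_monomial, one_smul]
  have e0 : ((d + Finsupp.single (0:Fin 2) (j+1) : Fin 2 →₀ ℕ)) 0 = d 0 + (j+1) := by
    simp [Finsupp.single_apply]
  have e1 : ((d + Finsupp.single (0:Fin 2) (j+1) : Fin 2 →₀ ℕ)) 1 = d 1 := by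
    simp [Finsupp.single_apply]
  rw [e0, e1, Fd]
  split_ifs <;> first | rfl | (exfalso; omega)

include hj1 hj2 in
lemma Phi_mul_g4 (f : S2) : Φ ξ p q N j (f * g4 (N := N) j) = 0 := by
  apply Phi_mul_eq_zero_of_basis
  intro d
  rw [g4, X_pow_eq_monomial, monomial_mul, mul_one, Φ_monomial, one_smul]
  have e0 : ((d + Finsupp.single (1:Fin 2) (N-j+1) : Fin 2 →₀ ℕ)) 0 = d 0 := by
    simp [Finsupp.single_apply]
  have e1 : ((d + Finsupp.single (1:Fin 2) (N-j+1) : Fin 2 →₀ ℕ)) 1 = d 1 + (N-j+1) := by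
    simp [Finsupp.single_apply]
  rw [e0, e1, Fd]
  split_ifs <;> first | rfl | (exfalso; omega)

include hj1 hj2 in
lemma Phi_mul_g1 (f : S2) : Φ ξ p q N j (f * g1 (N := N) p q j) = 0 := by
  apply Phi_mul_eq_zero_of_basis
  intro d
  have h1 : (g1 (N := N) p q j : S2)
      = monomial (Finsupp.single 0 j) p - monomial (Finsupp.single 1 (N-j)) q := by
    rw [g1, X_pow_eq_monomial, X_pow_eq_monomial, C_mul_monomial, C_mul_monomial,
      mul_one, mul_one]
  rw [h1, mul_sub, monomial_mul, monomial_mul, one_mul, one_mul, map_sub,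
    Φ_monomial, Φ_monomial]
  have e0a : ((d + Finsupp.single (0:Fin 2) j : Fin 2 →₀ ℕ)) 0 = d 0 + j := by simp [Finsupp.single_apply]
  have e1a : ((d + Finsupp.single (0:Fin 2) j : Fin 2 →₀ ℕ)) 1 = d 1 := by simp [Finsupp.single_apply]
  have e0b : ((d + Finsupp.single (1:Fin 2) (N-j) : Fin 2 →₀ ℕ)) 0 = d 0 := by simp [Finsupp.single_apply]
  have e1b : ((d + Finsupp.single (1:Fin 2) (N-j) : Fin 2 →₀ ℕ)) 1 = d 1 + (N-j) := by
    simp [Finsupp.single_apply]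
  rw [e0a, e1a, e0b, e1b]
  by_cases h00 : d 0 = 0 ∧ d 1 = 0
  · obtain ⟨hd0, hd1⟩ := h00
    rw [hd0, hd1, zero_add, zero_add, Fd, if_pos rfl, if_neg (by omega), if_pos rfl, Fd,
      if_neg (by omega), if_pos rfl, if_neg (by omega), if_pos rfl, smul_smul, smul_smul,
      mul_comm, sub_self]
  · have z1 : Fd ξ p q N j (d 0 + j) (d 1) = 0 := by
      rw [Fd]; split_ifs <;> first | rfl | (exfalso; omega)
    have z2 : Fd ξ p q N j (d 0) (d 1 + (N - j)) = 0 := by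
      rw [Fd]; split_ifs <;> first | rfl | (exfalso; omega)
    rw [z1, z2, smul_zero, smul_zero, sub_self]


end model



variable {N : ℕ} [NeZero N] {ξ : ℂ}

lemma d_decomp (d : Fin 2 →₀ ℕ) :
    d = Finsupp.single (0 : Fin 2) (d 0) + Finsupp.single (1 : Fin 2) (d 1) := by
  apply Finsupp.ext
  intro i
  fin_cases i <;> simp [Finsupp.single_apply]

lemma mono_eq (d : Fin 2 →₀ ℕ) (r : ℂ) :
    monomial d r = C r * ((X 0 : S2) ^ (d 0) * X 1 ^ (d 1)) := by
  rw [Xab_eq, C_mul_monomial, mul_one, ← d_decomp]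

lemma cycAct2_X0 : cycAct2 ξ (X 0) = C ξ * X 0 := by
  rw [cycAct2, aeval_X]
  rfl

lemma cycAct2_X1 : cycAct2 ξ (X 1) = C ξ⁻¹ * X 1 := by
  rw [cycAct2, aeval_X]
  rfl

lemma cycAct2_C (r : ℂ) : cycAct2 ξ (C r) = C r := by
  rw [cycAct2, aeval_C]
  rfl

lemma cycAct2_monomial (d : Fin 2 →₀ ℕ) (r : ℂ) :
    cycAct2 ξ (monomial d r) = (ξ ^ (d 0) * ξ⁻¹ ^ (d 1)) • monomial d r := by
  rw [mono_eq, map_mul, map_mul, map_pow, map_pow, cycAct2_C, cycAct2_X0, cycAct2_X1,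
    smul_eq_C_mul, mul_pow, mul_pow, ← C_pow, ← C_pow, C_mul]
  ring

section model2
variable {p q : ℂ} {j : ℕ}
variable (hξ : IsPrimitiveRoot ξ N) (hj1 : 1 ≤ j) (hj2 : j + 1 ≤ N)
  (hpq : ¬(p = 0 ∧ q = 0))

lemma g1_def : (g1 (N:=N) p q j) = C p * X 0 ^ j - C q * X 1 ^ (N - j) := rfl
lemma g2_def : (g2 : S2) = X 0 * X 1 := rfl
lemma g3_def : (g3 j : S2) = X 0 ^ (j + 1) := rfl
lemma g4_def : (g4 (N := N) j : S2) = X 1 ^ (N - j + 1) := rfl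



include hξ hj1 hj2 in
lemma Phi_equivariant (f : S2) :
    Φ ξ p q N j (cycAct2 ξ f)
      = AddMonoidAlgebra.single (1 : ZMod N) (1:ℂ) * Φ ξ p q N j f := by
  have key : (Φ ξ p q N j) ∘ₗ (cycAct2 ξ).toLinearMap
      = (LinearMap.mulLeft ℂ (AddMonoidAlgebra.single (1 : ZMod N) (1:ℂ))) ∘ₗ Φ ξ p q N j := by
    apply Module.Basis.ext (basisMonomials (Fin 2) ℂ)
    intro d
    have hbm : basisMonomials (Fin 2) ℂ d = monomial d 1 := by rw [coe_basisMonomials]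
    rw [hbm]
    simp only [LinearMap.coe_comp, Function.comp_apply, AlgHom.toLinearMap_apply,
      LinearMap.mulLeft_apply]
    rw [cycAct2_monomial, map_smul, Φ_monomial, one_smul, Fd_eigen hξ hj1 hj2]
  have h2 := congrArg (fun L : S2 →ₗ[ℂ] AddMonoidAlgebra ℂ (ZMod N) => L f) key
  simpa using h2

include hξ hj2 in
lemma J_stable : ∀ f ∈ Jd (N := N) p q j, cycAct2 ξ f ∈ Jd (N := N) p q j := by
  intro f hf
  have h1 : cycAct2 ξ f ∈ Ideal.map (cycAct2 ξ) (Jd (N := N) p q j) :=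
    Ideal.mem_map_of_mem _ hf
  refine Set.mem_of_mem_of_subset h1 ?_
  rw [Jd, Ideal.map_span]
  refine Ideal.span_le.2 ?_
  rintro y ⟨x, hx, rfl⟩
  have m1 : (g1 (N := N) p q j) ∈ Jd (N := N) p q j :=
    Ideal.subset_span (by simp [Jd])
  have m2 : (g2 : S2) ∈ Jd (N := N) p q j := Ideal.subset_span (by simp [Jd])
  have m3 : (g3 j : S2) ∈ Jd (N := N) p q j := Ideal.subset_span (by simp [Jd])
  have m4 : (g4 (N := N) j : S2) ∈ Jd (N := N) p q j := Ideal.subset_span (by simp [Jd])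
  simp only [Set.mem_insert_iff, Set.mem_singleton_iff] at hx
  rcases hx with rfl | rfl | rfl | rfl
  · have e1 : cycAct2 ξ (g1 (N := N) p q j) = C (ξ ^ j) * g1 (N := N) p q j := by
      rw [g1_def, map_sub, map_mul, map_mul, map_pow, map_pow, cycAct2_C, cycAct2_C,
        cycAct2_X0, cycAct2_X1, mul_pow, mul_pow, ← C_pow, ← C_pow,
        inv_pow_eq hξ (by omega)]
      ring
    rw [e1]
    exact Ideal.mul_mem_left _ _ m1
  · have e2 : cycAct2 ξ (g2 : S2) = g2 := by
      rw [g2_def, map_mul, cycAct2_X0, cycAct2_X1]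
      have : C ξ * C ξ⁻¹ = (1 : S2) := by
        rw [← C_mul, mul_inv_cancel₀ (xi_ne_zero hξ), C_1]
      calc (C ξ * X 0 : S2) * (C ξ⁻¹ * X 1) = (C ξ * C ξ⁻¹) * (X 0 * X 1) := by ring
      _ = X 0 * X 1 := by rw [this, one_mul]
    rw [e2]
    exact m2
  · have e3 : cycAct2 ξ (g3 j : S2) = C (ξ ^ (j+1)) * g3 j := by
      rw [g3_def, map_pow, cycAct2_X0, mul_pow, ← C_pow]
    rw [e3]
    exact Ideal.mul_mem_left _ _ m3
  · have e4 : cycAct2 ξ (g4 (N := N) j : S2) = C ((ξ⁻¹) ^ (N-j+1)) * g4 (N := N) j := by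
      rw [g4_def, map_pow, cycAct2_X1, mul_pow, ← C_pow]
    rw [e4]
    exact Ideal.mul_mem_left _ _ m4

lemma mem_span_quad {x a b c d : S2} (h : x ∈ Ideal.span {a, b, c, d}) :
    ∃ f1 f2 f3 f4 : S2, x = f1 * a + f2 * b + f3 * c + f4 * d := by
  rw [show ({a, b, c, d} : Set S2) = insert a {b, c, d} from rfl, Ideal.span_insert,
    Submodule.mem_sup] at h
  obtain ⟨y1, hy1, z1, hz1, rfl⟩ := h
  rw [Ideal.mem_span_singleton'] at hy1
  obtain ⟨f1, rfl⟩ := hy1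
  rw [show ({b, c, d} : Set S2) = insert b {c, d} from rfl, Ideal.span_insert,
    Submodule.mem_sup] at hz1
  obtain ⟨y2, hy2, z2, hz2, rfl⟩ := hz1
  rw [Ideal.mem_span_singleton'] at hy2
  obtain ⟨f2, rfl⟩ := hy2
  rw [show ({c, d} : Set S2) = insert c {d} from rfl, Ideal.span_insert,
    Submodule.mem_sup] at hz2
  obtain ⟨y3, hy3, z3, hz3, rfl⟩ := hz2
  rw [Ideal.mem_span_singleton'] at hy3
  obtain ⟨f3, rfl⟩ := hy3
  rw [Ideal.mem_span_singleton'] at hz3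
  obtain ⟨f4, rfl⟩ := hz3
  exact ⟨f1, f2, f3, f4, by ring⟩



include hj1 hj2 in
lemma J_ker : ∀ x ∈ Jd (N := N) p q j, Φ ξ p q N j x = 0 := by
  intro x hx
  obtain ⟨f1, f2, f3, f4, rfl⟩ := mem_span_quad hx
  rw [map_add, map_add, map_add, Phi_mul_g1 hj1 hj2, Phi_mul_g2 hj1 hj2,
    Phi_mul_g3 hj1 hj2, Phi_mul_g4 hj1 hj2, add_zero, add_zero, add_zero]

/-- representatives -/
noncomputable def μm (p q : ℂ) (N j : ℕ) [NeZero N] (w : ZMod N) : S2 :=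
  if w.val < j then X 0 ^ w.val
  else if j < w.val then X 1 ^ (N - w.val)
  else if q = 0 then C p⁻¹ * X 1 ^ (N - j) else C q⁻¹ * X 0 ^ j



include hj1 hj2 hpq in
lemma Phi_mu (w : ZMod N) : Φ ξ p q N j (μm p q N j w) = v ξ w := by
  have hvlt : w.val < N := ZMod.val_lt w
  have hcast : ((w.val : ℕ) : ZMod N) = w := ZMod.natCast_rightInverse w
  rw [μm]
  split_ifs with h1 h2 h3
  · -- w.val < j
    have : Φ ξ p q N j ((X 0 : S2) ^ w.val * X 1 ^ 0) = Fd ξ p q N j w.val 0 := Φ_Xab p q j _ _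
    rw [pow_zero, mul_one] at this
    rw [this, Fd, if_pos rfl, if_pos h1, hcast]
  · -- j < w.val
    have : Φ ξ p q N j ((X 0 : S2) ^ 0 * X 1 ^ (N - w.val)) = Fd ξ p q N j 0 (N - w.val) :=
      Φ_Xab p q j _ _
    rw [pow_zero, one_mul] at this
    rw [this, Fd, if_neg (by omega), if_pos rfl, if_pos (by omega)]
    congr 1
    rw [Nat.cast_sub (le_of_lt hvlt), ZMod.natCast_self, zero_sub, hcast, neg_neg]
  · -- w.val = j, q = 0
    have hwj : w.val = j := by omega
    have hp : p ≠ 0 := fun hp => hpq ⟨hp, h3⟩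
    rw [← smul_eq_C_mul, map_smul]
    have : Φ ξ p q N j ((X 0 : S2) ^ 0 * X 1 ^ (N - j)) = Fd ξ p q N j 0 (N - j) :=
      Φ_Xab p q j _ _
    rw [pow_zero, one_mul] at this
    rw [this, Fd, if_neg (by omega), if_pos rfl, if_neg (by omega), if_pos rfl, smul_smul,
      inv_mul_cancel₀ hp, one_smul, ← hwj, hcast]
  · -- w.val = j, q ≠ 0
    have hwj : w.val = j := by omega
    rw [← smul_eq_C_mul, map_smul]
    have : Φ ξ p q N j ((X 0 : S2) ^ j * X 1 ^ 0) = Fd ξ p q N j j 0 := Φ_Xab p q j _ _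
    rw [pow_zero, mul_one] at this
    rw [this, Fd, if_pos rfl, if_neg (by omega), if_pos rfl, smul_smul,
      inv_mul_cancel₀ h3, one_smul, ← hwj, hcast]

include hj1 hj2 hpq in
lemma mu_span (f : S2) :
    f ∈ Submodule.span ℂ (Set.range (μm p q N j)) ⊔
      Submodule.restrictScalars ℂ (Jd (N := N) p q j) := by
  set M := Submodule.span ℂ (Set.range (μm p q N j)) ⊔
      Submodule.restrictScalars ℂ (Jd (N := N) p q j) with hM
  have htop : Submodule.span ℂ (Set.range (basisMonomials (Fin 2) ℂ)) = ⊤ :=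
    Module.Basis.span_eq _
  have hsub : Set.range (⇑(basisMonomials (Fin 2) ℂ)) ⊆ (M : Set S2) := by
    rintro _ ⟨d, rfl⟩
    have hbm : basisMonomials (Fin 2) ℂ d = monomial d 1 := by rw [coe_basisMonomials]
    rw [hbm]
    have hmono : (monomial d (1:ℂ) : S2) = (X 0 : S2) ^ (d 0) * X 1 ^ (d 1) := by
      rw [mono_eq, C_1, one_mul]
    rw [hmono]
    have memJ : ∀ x ∈ Jd (N := N) p q j, x ∈ M := fun x hx =>
      Submodule.mem_sup_right hx
    have memμ : ∀ w : ZMod N, μm p q N j w ∈ M := fun w =>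
      Submodule.mem_sup_left (Submodule.subset_span ⟨w, rfl⟩)
    have m1 : (g1 (N := N) p q j) ∈ Jd (N := N) p q j := Ideal.subset_span (by simp [Jd])
    have m2 : (g2 : S2) ∈ Jd (N := N) p q j := Ideal.subset_span (by simp [Jd])
    have m3 : (g3 j : S2) ∈ Jd (N := N) p q j := Ideal.subset_span (by simp [Jd])
    have m4 : (g4 (N := N) j : S2) ∈ Jd (N := N) p q j := Ideal.subset_span (by simp [Jd])
    by_cases hb : d 1 = 0
    · rw [hb, pow_zero, mul_one]
      rcases lt_trichotomy (d 0) j with ha1 | ha2 | ha3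
      · -- X0^a = μm (a)
        have hval : ((d 0 : ℕ) : ZMod N).val = d 0 := ZMod.val_cast_of_lt (by omega)
        have : μm p q N j ((d 0 : ℕ) : ZMod N) = (X 0 : S2) ^ (d 0) := by
          rw [μm, hval, if_pos ha1]
        rw [← this]
        exact memμ _
      · subst ha2
        by_cases hq : q = 0
        · have hp : p ≠ 0 := fun hp => hpq ⟨hp, hq⟩
          have key : (X 0 : S2) ^ (d 0) = C p⁻¹ * g1 (N := N) p q (d 0) := by
            rw [g1_def, hq, C_0, zero_mul, sub_zero, ← mul_assoc, ← C_mul,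
              inv_mul_cancel₀ hp, C_1, one_mul]
          rw [key]
          exact memJ _ (Ideal.mul_mem_left _ _ m1)
        · have hval : ((d 0 : ℕ) : ZMod N).val = d 0 := ZMod.val_cast_of_lt (by omega)
          have key : (X 0 : S2) ^ (d 0) = q • μm p q N (d 0) ((d 0 : ℕ) : ZMod N) := by
            rw [μm, hval, if_neg (by omega), if_neg (by omega), if_neg hq, smul_eq_C_mul,
              ← mul_assoc, ← C_mul, mul_inv_cancel₀ hq, C_1, one_mul]
          rw [key]
          exact Submodule.smul_mem _ _ (memμ _)
      · -- a > j : X0^a = X0^(a-(j+1)) * g3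
        have key : (X 0 : S2) ^ (d 0) = (X 0 : S2) ^ (d 0 - (j+1)) * g3 j := by
          rw [g3_def, ← pow_add]
          congr 1
          omega
        rw [key]
        exact memJ _ (Ideal.mul_mem_left _ _ m3)
    · by_cases ha : d 0 = 0
      · rw [ha, pow_zero, one_mul]
        rcases lt_trichotomy (d 1) (N - j) with hb1 | hb2 | hb3
        · have hNb : N - d 1 < N := by omega
          have hval : (((N - d 1 : ℕ)) : ZMod N).val = N - d 1 := ZMod.val_cast_of_lt hNb
          have : μm p q N j (((N - d 1 : ℕ)) : ZMod N) = (X 1 : S2) ^ (d 1) := by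
            rw [μm, hval, if_neg (by omega), if_pos (by omega)]
            congr 1
            omega
          rw [← this]
          exact memμ _
        · by_cases hq : q = 0
          · have hp : p ≠ 0 := fun hp => hpq ⟨hp, hq⟩
            have hvalj : ((j : ℕ) : ZMod N).val = j := ZMod.val_cast_of_lt (by omega)
            have key : (X 1 : S2) ^ (d 1) = p • μm p q N j ((j : ℕ) : ZMod N) := by
              rw [μm, hvalj, if_neg (by omega), if_neg (by omega), if_pos hq, smul_eq_C_mul,
                ← mul_assoc, ← C_mul, mul_inv_cancel₀ hp, C_1, one_mul, hb2]
            rw [key]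
            exact Submodule.smul_mem _ _ (memμ _)
          · have hvalj : ((j : ℕ) : ZMod N).val = j := ZMod.val_cast_of_lt (by omega)
            have cc : (C q⁻¹ : S2) * C q = 1 := by
              rw [← C_mul, inv_mul_cancel₀ hq, C_1]
            have key : (X 1 : S2) ^ (d 1)
                = p • μm p q N j ((j : ℕ) : ZMod N) + (- C q⁻¹) * g1 (N := N) p q j := by
              rw [μm, hvalj, if_neg (by omega), if_neg (by omega), if_neg hq, smul_eq_C_mul,
                g1_def, hb2]
              linear_combination (-(X 1 : S2) ^ (N - j)) * cc
            rw [key]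
            exact Submodule.add_mem _ (Submodule.smul_mem _ _ (memμ _))
              (memJ _ (Ideal.mul_mem_left _ _ m1))
        · have key : (X 1 : S2) ^ (d 1) = (X 1 : S2) ^ (d 1 - (N-j+1)) * g4 (N := N) j := by
            rw [g4_def, ← pow_add]
            congr 1
            omega
          rw [key]
          exact memJ _ (Ideal.mul_mem_left _ _ m4)
      · -- both positive
        have key : (X 0 : S2) ^ (d 0) * X 1 ^ (d 1)
            = ((X 0 : S2) ^ (d 0 - 1) * X 1 ^ (d 1 - 1)) * g2 := by
          have e0 : (X 0 : S2) ^ (d 0) = X 0 ^ (d 0 - 1) * X 0 := by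
            rw [← pow_succ]; congr 1; omega
          have e1 : (X 1 : S2) ^ (d 1) = X 1 ^ (d 1 - 1) * X 1 := by
            rw [← pow_succ]; congr 1; omega
          rw [g2_def, e0, e1]
          ring
        rw [key]
        exact memJ _ (Ideal.mul_mem_left _ _ m2)
  have := htop ▸ Submodule.span_le.2 hsub
  exact this (Submodule.mem_top)

end model2


section conv
variable {N : ℕ} [NeZero N] {ξ : ℂ} {p q : ℂ} {j : ℕ}

noncomputable def e0 (J : Ideal S2) (L : S2 →ₗ[ℂ] AddMonoidAlgebra ℂ (ZMod N))
    (h : ∀ x ∈ J, L x = 0) : (S2 ⧸ J) →ₗ[ℂ] AddMonoidAlgebra ℂ (ZMod N) :=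
  (Submodule.liftQ (Submodule.restrictScalars ℂ J) L (fun x hx => h x hx)) ∘ₗ
    ((Submodule.Quotient.restrictScalarsEquiv ℂ J).symm :
      (S2 ⧸ J) ≃ₗ[ℂ] _).toLinearMap

lemma e0_mk (J : Ideal S2) (L : S2 →ₗ[ℂ] AddMonoidAlgebra ℂ (ZMod N))
    (h : ∀ x ∈ J, L x = 0) (f : S2) : e0 J L h (Ideal.Quotient.mk J f) = L f := rfl

lemma converse (hξ : IsPrimitiveRoot ξ N) (hj1 : 1 ≤ j) (hj2 : j + 1 ≤ N)
    (hpq : ¬(p = 0 ∧ q = 0)) :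
    (∀ f ∈ Jd (N := N) p q j, cycAct2 ξ f ∈ Jd (N := N) p q j) ∧
    ∃ e : (S2 ⧸ Jd (N := N) p q j) ≃ₗ[ℂ] AddMonoidAlgebra ℂ (ZMod N),
      ∀ f : S2, e (Ideal.Quotient.mk _ (cycAct2 ξ f))
        = AddMonoidAlgebra.single (1 : ZMod N) (1:ℂ) * e (Ideal.Quotient.mk _ f) := by
  refine ⟨J_stable hξ hj2, ?_⟩
  have hker : ∀ x ∈ Jd (N := N) p q j, Φ ξ p q N j x = 0 := J_ker hj1 hj2
  set E := e0 (Jd (N := N) p q j) (Φ ξ p q N j) hker with hE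
  have hmem : ∀ f : S2, Φ ξ p q N j f = 0 → f ∈ Jd (N := N) p q j := by
    intro f hf
    have hsp := mu_span hj1 hj2 hpq f
    rw [Submodule.mem_sup] at hsp
    obtain ⟨s, hs, z, hz, rfl⟩ := hsp
    obtain ⟨c, hc⟩ := (Submodule.mem_span_range_iff_exists_fun ℂ).1 hs
    have hφz : Φ ξ p q N j z = 0 := hker z hz
    rw [map_add, hφz, add_zero] at hf
    rw [← hc, map_sum] at hf
    simp_rw [map_smul, Phi_mu hj1 hj2 hpq] at hf
    have hc0 := indep hξ hf
    have hs0 : s = 0 := by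
      rw [← hc]
      exact Finset.sum_eq_zero fun w _ => by rw [hc0 w, zero_smul]
    rw [hs0, zero_add]
    exact hz
  have hinj : Function.Injective E := by
    rw [← LinearMap.ker_eq_bot, Submodule.eq_bot_iff]
    intro x hx
    obtain ⟨f, rfl⟩ := Ideal.Quotient.mk_surjective x
    rw [LinearMap.mem_ker, hE, e0_mk] at hx
    rw [Ideal.Quotient.eq_zero_iff_mem]
    exact hmem f hx
  have hsurj : Function.Surjective E := by
    rw [← LinearMap.range_eq_top, eq_top_iff, ← span_v_top hξ]
    apply Submodule.span_le.2
    rintro _ ⟨w, rfl⟩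
    exact ⟨Ideal.Quotient.mk _ (μm p q N j w),
      by rw [hE, e0_mk]; exact Phi_mu hj1 hj2 hpq w⟩
  refine ⟨LinearEquiv.ofBijective E ⟨hinj, hsurj⟩, fun f => ?_⟩
  show E (Ideal.Quotient.mk _ (cycAct2 ξ f))
      = AddMonoidAlgebra.single (1 : ZMod N) (1:ℂ) * E (Ideal.Quotient.mk _ f)
  rw [hE, e0_mk, e0_mk]
  exact Phi_equivariant hξ hj1 hj2 f

end conv

section forw
variable {N : ℕ} [NeZero N] {ξ : ℂ}

lemma const_coeff_zero {I : Ideal S2}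
    (hI : I ≤ Ideal.span (Set.range (X : Fin 2 → S2))) :
    ∀ f ∈ I, constantCoeff f = 0 := by
  intro f hf
  have h2 : Ideal.span (Set.range (X : Fin 2 → S2))
      ≤ RingHom.ker (constantCoeff : S2 →+* ℂ) := by
    apply Ideal.span_le.2
    rintro _ ⟨i, rfl⟩
    simp [RingHom.mem_ker]
  exact h2 (hI hf)

lemma forward (hN2 : 2 ≤ N) (hξ : IsPrimitiveRoot ξ N)
    (I : Ideal S2) (hI : I ≤ Ideal.span (Set.range (X : Fin 2 → S2)))
    (e : (S2 ⧸ I) ≃ₗ[ℂ] AddMonoidAlgebra ℂ (ZMod N))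
    (he : ∀ f : S2, e (Ideal.Quotient.mk I (cycAct2 ξ f))
      = AddMonoidAlgebra.single (1 : ZMod N) (1:ℂ) * e (Ideal.Quotient.mk I f)) :
    ∃ j : ℕ, 1 ≤ j ∧ j + 1 ≤ N ∧ ∃ p' q' : ℂ, ¬(p' = 0 ∧ q' = 0) ∧
      I = Jd (N := N) p' q' j := by
  classical
  set φ : S2 →ₗ[ℂ] AddMonoidAlgebra ℂ (ZMod N) :=
    e.toLinearMap ∘ₗ (Ideal.Quotient.mkₐ ℂ I).toLinearMap with hφdef
  have hφ : ∀ f : S2, φ f = e (Ideal.Quotient.mk I f) := fun f => rfl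
  set t : ℕ → ℕ → ℂ := fun a b => (φ ((X 0 : S2) ^ a * X 1 ^ b)) 0 with ht
  -- eigen decomposition of monomials
  have hmono : ∀ a b : ℕ,
      φ ((X 0 : S2) ^ a * X 1 ^ b) = t a b • v ξ (((a:ℕ) : ZMod N) - ((b:ℕ) : ZMod N)) := by
    intro a b
    apply eigen hξ
    have h2 : cycAct2 ξ ((X 0:S2) ^ a * X 1 ^ b)
        = (ξ ^ a * ξ⁻¹ ^ b) • ((X 0:S2) ^ a * X 1 ^ b) := by
      rw [Xab_eq, cycAct2_monomial, (single_apply_d a b).1, (single_apply_d a b).2]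
    have h1 := he ((X 0:S2) ^ a * X 1 ^ b)
    rw [h2] at h1
    rw [← hφ, ← hφ, map_smul, ← chi_cast_sub hξ] at h1
    exact h1.symm
  have hmem : ∀ a b : ℕ, ((X 0:S2) ^ a * X 1 ^ b ∈ I ↔ t a b = 0) := by
    intro a b
    constructor
    · intro h
      have h1 : φ ((X 0:S2) ^ a * X 1 ^ b) = 0 := by
        rw [hφ, Ideal.Quotient.eq_zero_iff_mem.2 h, map_zero]
      rw [ht]
      simp only []
      rw [h1]
      rfl
    · intro h
      rw [← Ideal.Quotient.eq_zero_iff_mem]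
      apply e.map_eq_zero_iff.1
      rw [← hφ, hmono a b, h, zero_smul]
  have hmem0 : ∀ f : S2, φ f = 0 → f ∈ I := by
    intro f hf
    rw [← Ideal.Quotient.eq_zero_iff_mem]
    apply e.map_eq_zero_iff.1
    rw [← hφ]
    exact hf
  have hconst : ∀ a b : ℕ, 0 < a + b → constantCoeff ((X 0:S2)^a * X 1^b) = 0 := by
    intro a b hab
    rw [map_mul, map_pow, map_pow, constantCoeff_X, constantCoeff_X]
    rcases (by omega : 0 < a ∨ 0 < b) with h | h
    · rw [zero_pow (by omega : a ≠ 0), zero_mul]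
    · rw [zero_pow (by omega : b ≠ 0), mul_zero]
  have h1ne : t 0 0 ≠ 0 := by
    intro h
    have h1 : (X 0:S2)^0 * X 1^0 ∈ I := (hmem 0 0).2 h
    rw [pow_zero, pow_zero, mul_one] at h1
    have h2 := const_coeff_zero hI 1 h1
    rw [map_one] at h2
    exact one_ne_zero h2
  have hzero_mem : ∀ a b : ℕ, 0 < a + b → (((a:ℕ) : ZMod N) = ((b:ℕ) : ZMod N)) →
      (X 0:S2)^a * X 1^b ∈ I := by
    intro a b hab hw
    have harg : ((a:ℕ) : ZMod N) - ((b:ℕ) : ZMod N)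
        = ((0:ℕ) : ZMod N) - ((0:ℕ) : ZMod N) := by
      rw [hw, sub_self, Nat.cast_zero, sub_self]
    have h1 : φ ((t 0 0) • ((X 0:S2)^a * X 1^b) - (t a b) • ((X 0:S2)^0 * X 1^0)) = 0 := by
      rw [map_sub, map_smul, map_smul, hmono a b, hmono 0 0, harg, smul_smul, smul_smul,
        mul_comm, sub_self]
    have h2 := hmem0 _ h1
    have h3 := const_coeff_zero hI _ h2
    rw [map_sub] at h3
    have hsm : ∀ (c : ℂ) (f : S2), constantCoeff (c • f) = c * constantCoeff f := by
      intro c f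
      rw [smul_eq_C_mul, map_mul, constantCoeff_C]
    rw [hsm, hsm, hconst a b hab, pow_zero, pow_zero, mul_one, map_one, mul_zero, mul_one,
      zero_sub, neg_eq_zero] at h3
    exact (hmem a b).2 h3
  have hxy : (X 0:S2) * X 1 ∈ I := by
    have h1 := hzero_mem 1 1 (by omega) rfl
    rwa [pow_one, pow_one] at h1
  have hxN : (X 0:S2) ^ N ∈ I := by
    have h1 := hzero_mem N 0 (by omega) (by rw [ZMod.natCast_self, Nat.cast_zero])
    rwa [pow_zero, mul_one] at h1
  have hyN : (X 1:S2) ^ N ∈ I := by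
    have h1 := hzero_mem 0 N (by omega) (by rw [ZMod.natCast_self, Nat.cast_zero])
    rwa [pow_zero, one_mul] at h1
  have hbig : ∀ a b : ℕ, 0 < a → 0 < b → (X 0:S2)^a * X 1^b ∈ I := by
    intro a b ha hb
    have e0 : (X 0 : S2) ^ a = X 0 ^ (a - 1) * X 0 := by
      rw [← pow_succ]; congr 1; omega
    have e1 : (X 1 : S2) ^ b = X 1 ^ (b - 1) * X 1 := by
      rw [← pow_succ]; congr 1; omega
    have key : (X 0:S2)^a * X 1^b = ((X 0:S2)^(a-1) * X 1^(b-1)) * (X 0 * X 1) := by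
      rw [e0, e1]; ring
    rw [key]
    exact Ideal.mul_mem_left _ _ hxy
  -- jx and jy
  have hexx : ∃ k, (X 0:S2) ^ (k+1) ∈ I := ⟨N-1, by rw [show N-1+1 = N by omega]; exact hxN⟩
  have hexy : ∃ k, (X 1:S2) ^ (k+1) ∈ I := ⟨N-1, by rw [show N-1+1 = N by omega]; exact hyN⟩
  set jx := Nat.find hexx + 1 with hjxdef
  set jy := Nat.find hexy + 1 with hjydef
  have hjxmem : (X 0:S2) ^ jx ∈ I := Nat.find_spec hexx
  have hjymem : (X 1:S2) ^ jy ∈ I := Nat.find_spec hexy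
  have hjxmin : ∀ m, m < jx → (X 0:S2) ^ m ∉ I := by
    intro m hm hmem'
    match m, hmem' with
    | 0, hmem' =>
      rw [pow_zero] at hmem'
      have h2 := const_coeff_zero hI 1 hmem'
      rw [map_one] at h2
      exact one_ne_zero h2
    | (k+1), hmem' => exact Nat.find_min hexx (by omega) hmem'
  have hjymin : ∀ m, m < jy → (X 1:S2) ^ m ∉ I := by
    intro m hm hmem'
    match m, hmem' with
    | 0, hmem' =>
      rw [pow_zero] at hmem'
      have h2 := const_coeff_zero hI 1 hmem'
      rw [map_one] at h2
      exact one_ne_zero h2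
    | (k+1), hmem' => exact Nat.find_min hexy (by omega) hmem'
  have hjxN : jx ≤ N := by
    have h1 : Nat.find hexx ≤ N - 1 :=
      Nat.find_le (by rw [show N-1+1 = N by omega]; exact hxN)
    omega
  have hjyN : jy ≤ N := by
    have h1 : Nat.find hexy ≤ N - 1 :=
      Nat.find_le (by rw [show N-1+1 = N by omega]; exact hyN)
    omega
  have hxpow : ∀ m, jx ≤ m → (X 0:S2)^m ∈ I := by
    intro m hm
    have h1 : (X 0:S2)^m = X 0^(m - jx) * X 0^jx := by rw [← pow_add]; congr 1; omega
    rw [h1]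
    exact Ideal.mul_mem_left _ _ hjxmem
  have hypow : ∀ m, jy ≤ m → (X 1:S2)^m ∈ I := by
    intro m hm
    have h1 : (X 1:S2)^m = X 1^(m - jy) * X 1^jy := by rw [← pow_add]; congr 1; omega
    rw [h1]
    exact Ideal.mul_mem_left _ _ hjymem
  have htx : ∀ a, a < jx → t a 0 ≠ 0 := by
    intro a ha h
    apply hjxmin a ha
    have h1 := (hmem a 0).2 h
    rwa [pow_zero, mul_one] at h1
  have hty : ∀ b, b < jy → t 0 b ≠ 0 := by
    intro b hb h
    apply hjymin b hb
    have h1 := (hmem 0 b).2 h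
    rwa [pow_zero, one_mul] at h1
  -- claim A : N + 1 ≤ jx + jy
  have hsurjφ : ∀ u : AddMonoidAlgebra ℂ (ZMod N), ∃ f, φ f = u := by
    intro u
    obtain ⟨x, hx⟩ := e.surjective u
    obtain ⟨f, rfl⟩ := Ideal.Quotient.mk_surjective x
    exact ⟨f, by rw [hφ, hx]⟩
  set W : Finset (ZMod N) :=
    ((Finset.range jx).image (fun a => ((a:ℕ) : ZMod N))) ∪
    ((Finset.Ico 1 jy).image (fun b => (-((b:ℕ) : ZMod N)))) with hW
  have hWv : ∀ f : S2, φ f ∈ Submodule.span ℂ (v ξ '' (W : Set (ZMod N))) := by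
    intro f
    have hf : f ∈ (⊤ : Submodule ℂ S2) := Submodule.mem_top
    rw [← Module.Basis.span_eq (basisMonomials (Fin 2) ℂ)] at hf
    have h1 : φ f ∈ Submodule.map φ
        (Submodule.span ℂ (Set.range (⇑(basisMonomials (Fin 2) ℂ)))) :=
      Submodule.mem_map_of_mem hf
    rw [Submodule.map_span] at h1
    have hle : Submodule.span ℂ (⇑φ '' Set.range (⇑(basisMonomials (Fin 2) ℂ)))
        ≤ Submodule.span ℂ (v ξ '' (W : Set (ZMod N))) := by
      apply Submodule.span_le.2
      rintro _ ⟨_, ⟨d, rfl⟩, rfl⟩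
      have hbm : basisMonomials (Fin 2) ℂ d = monomial d 1 := by rw [coe_basisMonomials]
      have hmono2 : (monomial d (1:ℂ) : S2) = (X 0 : S2) ^ (d 0) * X 1 ^ (d 1) := by
        rw [mono_eq, C_1, one_mul]
      rw [SetLike.mem_coe, hbm, hmono2, hmono (d 0) (d 1)]
      by_cases htz : t (d 0) (d 1) = 0
      · rw [htz, zero_smul]; exact Submodule.zero_mem _
      · apply Submodule.smul_mem
        apply Submodule.subset_span
        refine ⟨((d 0 : ℕ) : ZMod N) - ((d 1 : ℕ) : ZMod N), ?_, rfl⟩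
        have hnotI : (X 0:S2) ^ (d 0) * X 1 ^ (d 1) ∉ I := fun h => htz ((hmem _ _).1 h)
        rw [hW]
        simp only [Finset.coe_union, Set.mem_union, Finset.coe_image, Set.mem_image,
          Finset.mem_coe, Finset.mem_range, Finset.mem_Ico]
        rcases Nat.eq_zero_or_pos (d 1) with h1 | h1
        · left
          refine ⟨d 0, ?_, by rw [h1, Nat.cast_zero, sub_zero]⟩
          by_contra hge
          exact hnotI (by rw [h1, pow_zero, mul_one]; exact hxpow _ (by omega))
        · rcases Nat.eq_zero_or_pos (d 0) with h0 | h0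
          · right
            refine ⟨d 1, ⟨by omega, ?_⟩, by rw [h0, Nat.cast_zero, zero_sub]⟩
            by_contra hge
            exact hnotI (by rw [h0, pow_zero, one_mul]; exact hypow _ (by omega))
          · exact absurd (hbig _ _ h0 h1) hnotI
    exact hle h1
  have hWfull : ∀ w : ZMod N, w ∈ W := by
    intro w0
    by_contra hw0
    obtain ⟨f, hf⟩ := hsurjφ (v ξ w0)
    have h1 := hWv f
    rw [hf] at h1
    have h2 : Submodule.span ℂ (v ξ '' (W : Set (ZMod N))) ≤ LinearMap.ker (ℓ ξ w0) := by
      apply Submodule.span_le.2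
      rintro _ ⟨w, hw, rfl⟩
      rw [SetLike.mem_coe, LinearMap.mem_ker, ell_v hξ, if_neg]
      intro h
      exact hw0 (h ▸ hw)
    have h3 := h2 h1
    rw [LinearMap.mem_ker, ell_v hξ, if_pos rfl] at h3
    exact (Nat.cast_ne_zero.2 (by omega : N ≠ 0) : (N:ℂ) ≠ 0) h3
  have hcard : N + 1 ≤ jx + jy := by
    have h1 : (Finset.univ : Finset (ZMod N)) ⊆ W := fun w _ => hWfull w
    have h2 := Finset.card_le_card h1
    rw [Finset.card_univ, ZMod.card] at h2
    have h3 := Finset.card_union_le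
      ((Finset.range jx).image (fun a => ((a:ℕ) : ZMod N)))
      ((Finset.Ico 1 jy).image (fun b => (-((b:ℕ) : ZMod N))))
    have h4 := Finset.card_image_le (s := Finset.range jx) (f := fun a => ((a:ℕ) : ZMod N))
    have h5 := Finset.card_image_le (s := Finset.Ico 1 jy)
      (f := fun b => (-((b:ℕ) : ZMod N)))
    rw [Finset.card_range] at h4
    rw [Nat.card_Ico] at h5
    rw [hW] at h2
    omega
  -- claim B : jx + jy ≤ N + 2
  have hcardB : jx + jy ≤ N + 2 := by
    by_contra hB
    push_neg at hB
    have hjy3 : 3 ≤ jy := by omega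
    set k := N - jy + 1 with hk
    have hwk : ((k:ℕ) : ZMod N) - ((0:ℕ) : ZMod N)
        = ((0:ℕ) : ZMod N) - (((jy - 1 : ℕ)) : ZMod N) := by
      have hsum : ((k:ℕ) : ZMod N) + (((jy - 1:ℕ)) : ZMod N) = 0 := by
        rw [← Nat.cast_add, show k + (jy - 1) = N by omega, ZMod.natCast_self]
      rw [Nat.cast_zero, sub_zero, zero_sub]
      exact eq_neg_of_add_eq_zero_left hsum
    have ht2 : t 0 (jy - 1) ≠ 0 := hty (jy-1) (by omega)
    have hrel : C (t 0 (jy-1)) * ((X 0:S2)^k * X 1^0)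
        - C (t k 0) * ((X 0:S2)^0 * X 1^(jy-1)) ∈ I := by
      apply hmem0
      rw [map_sub, ← smul_eq_C_mul, ← smul_eq_C_mul, map_smul, map_smul, hmono, hmono,
        hwk, smul_smul, smul_smul, mul_comm, sub_self]
    have hx1 : (X 0:S2) * (C (t 0 (jy-1)) * ((X 0:S2)^k * X 1^0)
        - C (t k 0) * ((X 0:S2)^0 * X 1^(jy-1))) ∈ I := Ideal.mul_mem_left _ _ hrel
    have hxyb : (X 0:S2) * (X 1^(jy-1)) ∈ I := by
      have e1 : (X 1:S2)^(jy-1) = X 1^(jy-2) * X 1 := by rw [← pow_succ]; congr 1; omega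
      have key : (X 0:S2) * X 1^(jy-1) = (X 1^(jy-2)) * (X 0 * X 1) := by rw [e1]; ring
      rw [key]
      exact Ideal.mul_mem_left _ _ hxy
    have hc : C (t 0 (jy-1)) * (X 0:S2)^(k+1) ∈ I := by
      have key : C (t 0 (jy-1)) * (X 0:S2)^(k+1)
          = (X 0:S2) * (C (t 0 (jy-1)) * ((X 0:S2)^k * X 1^0)
              - C (t k 0) * ((X 0:S2)^0 * X 1^(jy-1)))
            + C (t k 0) * ((X 0:S2) * X 1^(jy-1)) := by
        ring
      rw [key]
      exact Ideal.add_mem _ hx1 (Ideal.mul_mem_left _ _ hxyb)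
    have hfin : (X 0:S2)^(k+1) ∈ I := by
      have h2 : C (t 0 (jy-1))⁻¹ * (C (t 0 (jy-1)) * (X 0:S2)^(k+1)) ∈ I :=
        Ideal.mul_mem_left _ _ hc
      rwa [← mul_assoc, ← C_mul, inv_mul_cancel₀ ht2, C_1, one_mul] at h2
    exact hjxmin (k+1) (by omega) hfin
  -- common finishing lemma
  have final : ∀ (j : ℕ) (p' q' : ℂ), 1 ≤ j → j + 1 ≤ N → ¬(p' = 0 ∧ q' = 0) →
      g1 (N := N) p' q' j ∈ I → (g3 j : S2) ∈ I → (g4 (N := N) j : S2) ∈ I →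
      (∀ w : ZMod N, ∃ τ : ℂ, τ ≠ 0 ∧ φ (μm p' q' N j w) = τ • v ξ w) →
      I = Jd (N := N) p' q' j := by
    intro j p' q' hj1 hj2 hpq hg1 hg3 hg4 hφμ
    have hJI : Jd (N := N) p' q' j ≤ I := by
      rw [Jd]
      apply Ideal.span_le.2
      intro x hx
      simp only [Set.mem_insert_iff, Set.mem_singleton_iff] at hx
      rcases hx with rfl | rfl | rfl | rfl
      · exact hg1
      · rw [g2_def]; exact hxy
      · exact hg3
      · exact hg4
    refine le_antisymm ?_ hJI
    intro f hf
    have hsp := mu_span hj1 hj2 hpq f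
    rw [Submodule.mem_sup] at hsp
    obtain ⟨s, hs, z, hz, hfsz⟩ := hsp
    obtain ⟨c, hc⟩ := (Submodule.mem_span_range_iff_exists_fun ℂ).1 hs
    have hzJ : z ∈ Jd (N := N) p' q' j := hz
    have hsI : s ∈ I := by
      have h1 : s = f - z := by rw [← hfsz]; ring
      rw [h1]
      exact Ideal.sub_mem _ hf (hJI hzJ)
    have hφs : φ s = 0 := by
      rw [hφ, Ideal.Quotient.eq_zero_iff_mem.2 hsI, map_zero]
    choose τ hτ0 hτv using hφμ
    rw [← hc, map_sum] at hφs
    simp_rw [map_smul, hτv, smul_smul] at hφs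
    have hind := indep hξ hφs
    have hs0 : s = 0 := by
      rw [← hc]
      refine Finset.sum_eq_zero fun w _ => ?_
      have := hind w
      rw [(mul_eq_zero.1 this).resolve_right (hτ0 w), zero_smul]
    rw [← hfsz, hs0, zero_add]
    exact hzJ
  -- generic φμ
  have hφμgen : ∀ (j : ℕ) (p' q' : ℂ), j ≤ jx → N - j ≤ jy →
      (∃ τ : ℂ, τ ≠ 0 ∧ φ (μm p' q' N j (((j:ℕ)) : ZMod N)) = τ • v ξ (((j:ℕ)) : ZMod N)) →
      j + 1 ≤ N →
      ∀ w : ZMod N, ∃ τ : ℂ, τ ≠ 0 ∧ φ (μm p' q' N j w) = τ • v ξ w := by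
    intro j p' q' hjjx hjjy hslot hj2 w
    have hvlt : w.val < N := ZMod.val_lt w
    have hcast : ((w.val : ℕ) : ZMod N) = w := ZMod.natCast_rightInverse w
    by_cases h1 : w.val < j
    · refine ⟨t w.val 0, htx _ (by omega), ?_⟩
      rw [μm, if_pos h1]
      have h := hmono w.val 0
      rwa [pow_zero, mul_one, Nat.cast_zero, sub_zero, hcast] at h
    · by_cases h2 : j < w.val
      · refine ⟨t 0 (N - w.val), hty _ (by omega), ?_⟩
        rw [μm, if_neg h1, if_pos h2]
        have h := hmono 0 (N - w.val)
        have harg : ((0:ℕ) : ZMod N) - (((N - w.val:ℕ)) : ZMod N) = w := by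
          rw [Nat.cast_zero, zero_sub, Nat.cast_sub (le_of_lt hvlt), ZMod.natCast_self,
            zero_sub, neg_neg, hcast]
        rwa [pow_zero, one_mul, harg] at h
      · have hwj : w.val = j := by omega
        have hwcast : w = ((j:ℕ) : ZMod N) := by rw [← hwj, hcast]
        rw [hwcast]
        exact hslot
  -- case analysis
  by_cases hjy1 : jy = 1
  · -- jx = N, j = N - 1, p' = 0, q' = 1
    have hjxN' : jx = N := by omega
    have hy1 : (X 1:S2) ∈ I := by
      have := hjymem
      rwa [hjy1, pow_one] at this
    refine ⟨N - 1, by omega, by omega, 0, 1, by simp, ?_⟩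
    have hNN : N - (N - 1) = 1 := by omega
    have key := final (N-1) 0 1 (by omega) (by omega) (by simp) ?_ ?_ ?_ ?_
    · exact key
    · rw [g1_def, C_0, zero_mul, zero_sub, hNN, pow_one, C_1, one_mul]
      exact Submodule.neg_mem _ hy1
    · rw [g3_def, show N - 1 + 1 = N by omega]
      exact hxN
    · rw [g4_def, hNN]
      have key2 : (X 1:S2)^(1+1) = X 1 * X 1 := by ring
      rw [key2]
      exact Ideal.mul_mem_left _ _ hy1
    · apply hφμgen (N-1) 0 1 (by omega) (by omega) ?_ (by omega)
      have hvalj : (((N-1:ℕ)) : ZMod N).val = N - 1 := ZMod.val_cast_of_lt (by omega)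
      refine ⟨t (N-1) 0, htx _ (by omega), ?_⟩
      rw [μm, hvalj, if_neg (by omega), if_neg (by omega), if_neg one_ne_zero, inv_one,
        C_1, one_mul]
      have h := hmono (N-1) 0
      rwa [pow_zero, mul_one, Nat.cast_zero, sub_zero] at h
  · by_cases hsum : jx + jy = N + 1
    · -- j = jx, p' = 1, q' = 0
      refine ⟨jx, by omega, by omega, 1, 0, by simp, ?_⟩
      have hNj : N - jx = jy - 1 := by omega
      have key := final jx 1 0 (by omega) (by omega) (by simp) ?_ ?_ ?_ ?_
      · exact key
      · rw [g1_def, C_0, zero_mul, sub_zero, C_1, one_mul]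
        exact hjxmem
      · rw [g3_def]
        exact hxpow _ (by omega)
      · rw [g4_def, hNj, show jy - 1 + 1 = jy by omega]
        exact hjymem
      · apply hφμgen jx 1 0 (by omega) (by omega) ?_ (by omega)
        have hvalj : ((jx:ℕ) : ZMod N).val = jx := ZMod.val_cast_of_lt (by omega)
        refine ⟨t 0 (jy - 1), hty _ (by omega), ?_⟩
        rw [μm, hvalj, if_neg (by omega), if_neg (by omega), if_pos rfl, inv_one, C_1,
          one_mul, hNj]
        have h := hmono 0 (jy - 1)
        have harg : ((0:ℕ) : ZMod N) - (((jy - 1:ℕ)) : ZMod N) = ((jx:ℕ) : ZMod N) := by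
          have hsum2 : ((jx:ℕ) : ZMod N) + (((jy - 1:ℕ)) : ZMod N) = 0 := by
            rw [← Nat.cast_add, show jx + (jy - 1) = N by omega, ZMod.natCast_self]
          rw [Nat.cast_zero, zero_sub]
          exact neg_eq_of_add_eq_zero_left hsum2
        rwa [pow_zero, one_mul, harg] at h
    · -- jx + jy = N + 2 : j = jx - 1, p' = t 0 (jy-1), q' = t (jx-1) 0
      have hsum2 : jx + jy = N + 2 := by omega
      have hjx2 : 2 ≤ jx := by omega
      have hjy2 : 2 ≤ jy := by omega
      have hq : t (jx-1) 0 ≠ 0 := htx _ (by omega)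
      have hp : t 0 (jy-1) ≠ 0 := hty _ (by omega)
      refine ⟨jx - 1, by omega, by omega, t 0 (jy-1), t (jx-1) 0, fun h => hp h.1, ?_⟩
      have hNj : N - (jx - 1) = jy - 1 := by omega
      have harg : (((jx - 1:ℕ)) : ZMod N) - ((0:ℕ) : ZMod N)
          = ((0:ℕ) : ZMod N) - (((jy - 1:ℕ)) : ZMod N) := by
        have hsum3 : (((jx - 1:ℕ)) : ZMod N) + (((jy - 1:ℕ)) : ZMod N) = 0 := by
          rw [← Nat.cast_add, show jx - 1 + (jy - 1) = N by omega, ZMod.natCast_self]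
        rw [Nat.cast_zero, sub_zero, zero_sub]
        exact eq_neg_of_add_eq_zero_left hsum3
      have key := final (jx - 1) (t 0 (jy-1)) (t (jx-1) 0) (by omega) (by omega)
        (fun h => hp h.1) ?_ ?_ ?_ ?_
      · exact key
      · rw [g1_def, hNj]
        apply hmem0
        rw [map_sub, ← smul_eq_C_mul, ← smul_eq_C_mul, map_smul, map_smul]
        have hm1 := hmono (jx - 1) 0
        rw [pow_zero, mul_one] at hm1
        have hm2 := hmono 0 (jy - 1)
        rw [pow_zero, one_mul] at hm2
        rw [hm1, hm2, harg, smul_smul, smul_smul, mul_comm, sub_self]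
      · rw [g3_def, show jx - 1 + 1 = jx by omega]
        exact hjxmem
      · rw [g4_def, hNj, show jy - 1 + 1 = jy by omega]
        exact hjymem
      · apply hφμgen (jx - 1) _ _ (by omega) (by omega) ?_ (by omega)
        have hvalj : (((jx - 1:ℕ)) : ZMod N).val = jx - 1 := ZMod.val_cast_of_lt (by omega)
        refine ⟨(t (jx-1) 0)⁻¹ * t (jx-1) 0, by rw [inv_mul_cancel₀ hq]; exact one_ne_zero, ?_⟩
        rw [μm, hvalj, if_neg (by omega), if_neg (by omega), if_neg hq, ← smul_eq_C_mul,
          map_smul]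
        have h := hmono (jx - 1) 0
        rw [pow_zero, mul_one, Nat.cast_zero, sub_zero] at h
        rw [h, smul_smul]

end forw
end Stmt16

/-- For the binary cyclic group `C̃_n ≅ ℤ/2nℤ` acting on `ℂ[x,y]` with generator
`x ↦ ξx`, `y ↦ ξ⁻¹y` (`ξ` a primitive `2n`-th root of unity), an ideal `I ⊆ ⟨x,y⟩` is a
`C̃_n`-cluster (stable under the action, with `ℂ[x,y]/I` isomorphic as a module over the
group algebra to the regular representation `ℂ[ℤ/2nℤ]`) iff it has the form
`⟨p·xʲ - q·y^{2n-j}, xy, x^{j+1}, y^{2n-j+1}⟩` for some `1 ≤ j ≤ 2n-1` and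
`(p,q) ≠ (0,0)`. -/
theorem stmt16 (n : ℕ) (hn : 1 ≤ n) (ξ : ℂ) (hξ : IsPrimitiveRoot ξ (2 * n))
    (I : Ideal (MvPolynomial (Fin 2) ℂ))
    (hI : I ≤ Ideal.span (Set.range (X : Fin 2 → MvPolynomial (Fin 2) ℂ))) :
    ((∀ f ∈ I, cycAct2 ξ f ∈ I) ∧
      ∃ e : (MvPolynomial (Fin 2) ℂ ⧸ I) ≃ₗ[ℂ] AddMonoidAlgebra ℂ (ZMod (2 * n)),
        ∀ f : MvPolynomial (Fin 2) ℂ,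
          e (Ideal.Quotient.mk I (cycAct2 ξ f)) =
            AddMonoidAlgebra.single (1 : ZMod (2 * n)) (1 : ℂ) * e (Ideal.Quotient.mk I f))
    ↔
    ∃ j : ℕ, 1 ≤ j ∧ j ≤ 2 * n - 1 ∧ ∃ p q : ℂ, (p, q) ≠ (0, 0) ∧
      I = Ideal.span {C p * X 0 ^ j - C q * X 1 ^ (2 * n - j), X 0 * X 1,
        X 0 ^ (j + 1), X 1 ^ (2 * n - j + 1)} := by
  haveI : NeZero (2 * n) := ⟨by omega⟩
  constructor
  · rintro ⟨hstab, e, he⟩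
    obtain ⟨j, hj1, hj2, p, q, hpq, hIJ⟩ := Stmt16.forward (by omega) hξ I hI e he
    exact ⟨j, hj1, by omega, p, q,
      fun h => hpq ⟨congrArg Prod.fst h, congrArg Prod.snd h⟩, hIJ⟩
  · rintro ⟨j, hj1, hj2, p, q, hpq, rfl⟩
    have hpq' : ¬(p = 0 ∧ q = 0) := fun h => hpq (by rw [h.1, h.2])
    exact Stmt16.converse (N := 2 * n) hξ hj1 (by omega) hpq'
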